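/- arXiv:2011.07863 — 6 statements merged into one kernel-verified Lean document; each statement's English description precedes it below -/
import Mathlib

section
/- Let F be a finite field with q elements and let Δ ≥ 1 be an integer with q ≥ 3Δ. Then there exists an injective family of q³ subsets S₁, …, S_{q³} of the ground set F × F (which has q² elements), each subset of size exactly q, such that for every index i and every collection of at most Δ of the other subsets, the number of elements of Sᵢ that belong to none of the chosen other subsets is at least Δ. -/
open Finset Polynomial

/-- Evaluation of a quadratic with coefficient triple `v`. -/
def quadEval {F : Type*} [Field F] (v : F × F × F) (x : F) : F :=
  v.1 * x ^ 2 + v.2.1 * x + v.2.2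

lemma quad_collisions {F : Type*} [Field F] [Fintype F] [DecidableEq F]
    {v w : F × F × F} (hvw : v ≠ w) :
    (Finset.univ.filter (fun x => quadEval v x = quadEval w x)).card ≤ 2 := by
  set p : F[X] := C (v.1 - w.1) * X ^ 2 + C (v.2.1 - w.2.1) * X + C (v.2.2 - w.2.2) with hp
  have hc2 : p.coeff 2 = v.1 - w.1 := by simp [hp, coeff_add, coeff_C_mul, coeff_C, coeff_sub, sub_mul, coeff_X_pow, coeff_X]
  have hc1 : p.coeff 1 = v.2.1 - w.2.1 := by simp [hp, coeff_add, coeff_C_mul, coeff_C, coeff_sub, sub_mul, coeff_X_pow, coeff_X]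
  have hc0 : p.coeff 0 = v.2.2 - w.2.2 := by simp [hp, coeff_add, coeff_C_mul, coeff_C, coeff_sub, sub_mul, coeff_X_pow, coeff_X]
  have hp0 : p ≠ 0 := by
    intro h
    apply hvw
    have h2 : v.1 = w.1 := by have := hc2; rw [h] at this; simp at this; linear_combination -this
    have h1 : v.2.1 = w.2.1 := by have := hc1; rw [h] at this; simp at this; linear_combination -this
    have h0 : v.2.2 = w.2.2 := by have := hc0; rw [h] at this; simp at this; linear_combination -this
    exact Prod.ext h2 (Prod.ext h1 h0)
  have hdeg : p.natDegree ≤ 2 := by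
    apply Polynomial.natDegree_quadratic_le
  have hsub : (Finset.univ.filter (fun x => quadEval v x = quadEval w x)) ⊆ p.roots.toFinset := by
    intro x hx
    simp only [mem_filter, Finset.mem_univ, true_and] at hx
    rw [Multiset.mem_toFinset, mem_roots hp0]
    simp only [hp, IsRoot, eval_add, eval_mul, eval_C, eval_pow, eval_X]
    simp only [quadEval] at hx
    linear_combination hx
  calc (Finset.univ.filter (fun x => quadEval v x = quadEval w x)).card
      ≤ p.roots.toFinset.card := Finset.card_le_card hsub
    _ ≤ Multiset.card p.roots := Multiset.toFinset_card_le _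
    _ ≤ p.natDegree := Polynomial.card_roots' p
    _ ≤ 2 := hdeg

/-- For a finite field `F` with `q` elements and `Δ ≥ 1` with `q ≥ 3Δ`,
there is an injective family of `q³` subsets of the ground set `F × F` (of size `q²`),
each of size exactly `q`, such that removing from any member the union of any at most
`Δ` other members leaves at least `Δ` elements. -/
theorem stmt_8 {F : Type*} [Field F] [Fintype F] [DecidableEq F] (Δ : ℕ)
    (hΔ : 1 ≤ Δ) (hq : 3 * Δ ≤ Fintype.card F) :
    ∃ S : Fin (Fintype.card F ^ 3) → Finset (F × F),
      Function.Injective S ∧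
      (∀ i, (S i).card = Fintype.card F) ∧
      (∀ (i : Fin (Fintype.card F ^ 3)) (T : Finset (Fin (Fintype.card F ^ 3))),
        i ∉ T → T.card ≤ Δ → Δ ≤ ((S i) \ T.biUnion S).card) := by
  have hcard : Fintype.card (F × F × F) = Fintype.card F ^ 3 := by
    simp [Fintype.card_prod]; ring
  let e : Fin (Fintype.card F ^ 3) ≃ (F × F × F) :=
    (Fintype.equivFinOfCardEq hcard).symm
  let S : Fin (Fintype.card F ^ 3) → Finset (F × F) :=
    fun i => Finset.univ.image (fun x => (x, quadEval (e i) x))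
  have hmem : ∀ i x y, (x, y) ∈ S i ↔ y = quadEval (e i) x := by
    intro i x y
    simp only [S, Finset.mem_image, Finset.mem_univ, true_and]
    constructor
    · rintro ⟨a, ha⟩; obtain ⟨h1, h2⟩ := Prod.mk.injEq .. ▸ ha
      subst h1; exact h2.symm
    · rintro rfl; exact ⟨x, rfl⟩
  have hScard : ∀ i, (S i).card = Fintype.card F := by
    intro i
    rw [Finset.card_image_of_injective _ (fun a b h => (Prod.mk.injEq .. ▸ h).1)]
    exact Finset.card_univ
  -- intersection bound
  have hinter : ∀ i j, i ≠ j → (S i ∩ S j).card ≤ 2 := by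
    intro i j hij
    have hvw : e i ≠ e j := fun h => hij (e.injective h)
    have : (S i ∩ S j).card ≤
        (Finset.univ.filter (fun x => quadEval (e i) x = quadEval (e j) x)).card := by
      apply Finset.card_le_card_of_injOn Prod.fst
      · intro a ha
        simp only [Finset.mem_coe, Finset.mem_inter] at ha
        obtain ⟨x, y⟩ := a
        rw [hmem] at ha
        rw [hmem] at ha
        simp only [Finset.mem_coe, Finset.mem_filter, Finset.mem_univ, true_and]
        rw [← ha.1, ← ha.2]
      · intro a ha b hb hab
        simp only [Finset.mem_coe, Finset.mem_inter] at ha hb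
        obtain ⟨x, y⟩ := a; obtain ⟨x', y'⟩ := b
        simp only at hab
        subst hab
        rw [hmem] at ha
        rw [hmem] at hb
        rw [ha.1, hb.1]
    exact this.trans (quad_collisions hvw)
  refine ⟨S, ?_, hScard, ?_⟩
  · intro i j hSij
    by_contra hij
    have hvw : e i ≠ e j := fun h => hij (e.injective h)
    have h2 : (S i ∩ S j).card ≤ 2 := hinter i j hij
    rw [hSij, Finset.inter_self, hScard] at h2
    omega
  · intro i T hiT hT
    have hsplit : (S i ∩ T.biUnion S) = T.biUnion (fun j => S i ∩ S j) := by
      ext a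
      simp only [Finset.mem_inter, Finset.mem_biUnion]
      tauto
    have hbound : (S i ∩ T.biUnion S).card ≤ 2 * Δ := by
      rw [hsplit]
      calc (T.biUnion (fun j => S i ∩ S j)).card
          ≤ ∑ j ∈ T, (S i ∩ S j).card := Finset.card_biUnion_le
        _ ≤ ∑ _j ∈ T, 2 := Finset.sum_le_sum (fun j hj =>
            hinter i j (fun h => hiT (h ▸ hj)))
        _ = 2 * T.card := by rw [Finset.sum_const, smul_eq_mul, mul_comm]
        _ ≤ 2 * Δ := by omega
    have hkey := Finset.card_sdiff_add_card_inter (S i) (T.biUnion S)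
    have := hScard i
    omega
end

section
/- Let F be a finite field with q elements, let d ≥ 1, ρ ≥ 0 and t ≥ 1 be integers, and let g₀, g₁, …, g_t be polynomials over F, each of degree at most d, with gᵢ ≠ g₀ for every 1 ≤ i ≤ t. If for every element a ∈ F the number of indices 1 ≤ i ≤ t with gᵢ(a) = g₀(a) is at least ρ+1 (i.e., the graphs of g₁,…,g_t (ρ+1)-cover the graph of g₀), then t · d ≥ q · (ρ+1). -/
/-- If the graphs of polynomials `g 1, …, g t` (each of degree at most `d`,
each different from `g₀`) over a finite field `F` with `q` elements `(ρ+1)`-cover the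
graph of `g₀` (every `a ∈ F` has at least `ρ+1` indices `i` with `gᵢ(a) = g₀(a)`),
then `t · d ≥ q · (ρ+1)`. -/
theorem stmt_10 {F : Type*} [Field F] [Fintype F] [DecidableEq F]
    (d ρ t : ℕ) (hd : 1 ≤ d) (ht : 1 ≤ t)
    (g₀ : Polynomial F) (g : Fin t → Polynomial F)
    (hdeg₀ : g₀.natDegree ≤ d) (hdeg : ∀ i, (g i).natDegree ≤ d)
    (hne : ∀ i, g i ≠ g₀)
    (hcover : ∀ a : F,
      ρ + 1 ≤ (Finset.univ.filter fun i => (g i).eval a = g₀.eval a).card) :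
    Fintype.card F * (ρ + 1) ≤ t * d := by
  have key : ∀ i : Fin t,
      (Finset.univ.filter fun a : F => (g i).eval a = g₀.eval a).card ≤ d := by
    intro i
    have hsub : (Finset.univ.filter fun a : F => (g i).eval a = g₀.eval a)
        ⊆ (g i - g₀).roots.toFinset := by
      intro a ha
      simp only [Finset.mem_filter] at ha
      rw [Multiset.mem_toFinset, Polynomial.mem_roots (sub_ne_zero.mpr (hne i))]
      simp [Polynomial.IsRoot, ha.2]
    calc (Finset.univ.filter fun a : F => (g i).eval a = g₀.eval a).card
        ≤ (g i - g₀).roots.toFinset.card := Finset.card_le_card hsub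
      _ ≤ Multiset.card (g i - g₀).roots := Multiset.toFinset_card_le _
      _ ≤ (g i - g₀).natDegree := Polynomial.card_roots' _
      _ ≤ d := (Polynomial.natDegree_sub_le _ _).trans (by simp [hdeg i, hdeg₀])
  calc Fintype.card F * (ρ + 1)
      = ∑ _a : F, (ρ + 1) := by simp [mul_comm]
    _ ≤ ∑ a : F, (Finset.univ.filter fun i => (g i).eval a = g₀.eval a).card :=
        Finset.sum_le_sum fun a _ => hcover a
    _ = ∑ i : Fin t, (Finset.univ.filter fun a : F => (g i).eval a = g₀.eval a).card := by
        simp only [Finset.card_filter]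
        exact Finset.sum_comm
    _ ≤ ∑ _i : Fin t, d := Finset.sum_le_sum fun i _ => key i
    _ = t * d := by simp [mul_comm]
end

section
/- Let F be a finite field with q elements, let Δ ≥ 1 and p ≥ 0 be integers with q·(p+1) ≥ 3Δ, and let g₀, g₁, …, g_Δ be polynomials over F, each of degree at most 2, with gᵢ ≠ g₀ for every 1 ≤ i ≤ Δ. Then the number of elements a ∈ F such that at most p of the indices 1 ≤ i ≤ Δ satisfy gᵢ(a) = g₀(a) is at least Δ/(p+1) (as a real-number inequality). -/
/-- For `q·(p+1) ≥ 3Δ` and polynomials `g₀, g 1, …, g Δ` of degree at most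
`2` over a finite field `F` with `q` elements, with `g i ≠ g₀` for all `i`, the number
of elements `a ∈ F` such that at most `p` indices `i` satisfy `gᵢ(a) = g₀(a)` is at
least `Δ/(p+1)` (as a real-number inequality). -/
theorem stmt_11 {F : Type*} [Field F] [Fintype F] [DecidableEq F] (Δ p : ℕ)
    (hΔ : 1 ≤ Δ) (hq : 3 * Δ ≤ Fintype.card F * (p + 1))
    (g₀ : Polynomial F) (g : Fin Δ → Polynomial F)
    (hdeg₀ : g₀.natDegree ≤ 2) (hdeg : ∀ i, (g i).natDegree ≤ 2)
    (hne : ∀ i, g i ≠ g₀) :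
    (Δ : ℝ) / ((p : ℝ) + 1) ≤
      ((Finset.univ.filter fun a : F =>
          (Finset.univ.filter fun i => (g i).eval a = g₀.eval a).card ≤ p).card : ℝ) := by
  classical
  set cnt : F → ℕ := fun a => (Finset.univ.filter fun i => (g i).eval a = g₀.eval a).card
    with hcnt
  -- per-index bound: each g i agrees with g₀ on at most 2 points
  have hroot : ∀ i, (Finset.univ.filter fun a : F => (g i).eval a = g₀.eval a).card ≤ 2 := by
    intro i
    have hne' : g i - g₀ ≠ 0 := sub_ne_zero.mpr (hne i)
    have hsub : (Finset.univ.filter fun a : F => (g i).eval a = g₀.eval a)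
        ⊆ (g i - g₀).roots.toFinset := by
      intro a ha
      simp only [Finset.mem_filter, Finset.mem_univ, true_and] at ha
      simp [Polynomial.mem_roots, hne', Polynomial.IsRoot, sub_eq_zero, ha]
    calc (Finset.univ.filter fun a : F => (g i).eval a = g₀.eval a).card
        ≤ (g i - g₀).roots.toFinset.card := Finset.card_le_card hsub
      _ ≤ Multiset.card (g i - g₀).roots := (g i - g₀).roots.toFinset_card_le
      _ ≤ (g i - g₀).natDegree := Polynomial.card_roots' _
      _ ≤ max (g i).natDegree g₀.natDegree := Polynomial.natDegree_sub_le _ _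
      _ ≤ 2 := max_le (hdeg i) hdeg₀
  -- total incidences
  have htot : ∑ a : F, cnt a ≤ 2 * Δ := by
    have : ∑ a : F, cnt a = ∑ i : Fin Δ,
        (Finset.univ.filter fun a : F => (g i).eval a = g₀.eval a).card := by
      simp only [hcnt, Finset.card_filter]
      rw [Finset.sum_comm]
    rw [this]
    calc ∑ i : Fin Δ, (Finset.univ.filter fun a : F => (g i).eval a = g₀.eval a).card
        ≤ ∑ _i : Fin Δ, 2 := Finset.sum_le_sum fun i _ => hroot i
      _ = 2 * Δ := by simp [mul_comm]
  set G := Finset.univ.filter fun a : F => cnt a ≤ p with hG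
  set B := Finset.univ.filter fun a : F => ¬ cnt a ≤ p with hB
  have hcard : G.card + B.card = Fintype.card F := by
    rw [hG, hB, Finset.card_filter_add_card_filter_not, Finset.card_univ]
  have hBsum : (p + 1) * B.card ≤ ∑ a : F, cnt a := by
    calc (p + 1) * B.card = ∑ _a ∈ B, (p + 1) := by rw [Finset.sum_const, smul_eq_mul, mul_comm]
      _ ≤ ∑ a ∈ B, cnt a := by
          refine Finset.sum_le_sum fun a ha => ?_
          simp only [hB, Finset.mem_filter] at ha
          omega
      _ ≤ ∑ a : F, cnt a := Finset.sum_le_sum_of_subset (Finset.filter_subset _ _)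
  have hkey : Δ ≤ G.card * (p + 1) := by
    have h1 : (p + 1) * B.card ≤ 2 * Δ := le_trans hBsum htot
    nlinarith [hcard, hq]
  have hppos : (0 : ℝ) < (p : ℝ) + 1 := by positivity
  rw [div_le_iff₀ hppos]
  calc (Δ : ℝ) ≤ (G.card * (p + 1) : ℕ) := by exact_mod_cast hkey
    _ = (G.card : ℝ) * ((p : ℝ) + 1) := by push_cast; ring
end

section
/- Let G be a simple graph on a vertex set V, let φ : V → {1,…,α} be a D-defective coloring of G (every vertex v has at most D neighbors u with φ(u) = φ(v)), let F₁, …, F_α be subsets of {1,…,m}, and let φ' : V → {1,…,m} be a function such that for every vertex v: (1) φ'(v) ∈ F_{φ(v)}, and (2) the number of neighbors u of v with φ(u) ≠ φ(v) and φ'(v) ∈ F_{φ(u)} is at most ρ. Then φ' is a (ρ+D)-defective m-coloring of G: every vertex v has at most ρ+D neighbors u with φ'(u) = φ'(v). -/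
/-- Given a `D`-defective `α`-coloring `φ` of `G`, sets `F 1, …, F α`
of colors in `{1,…,m}`, and a new coloring `φ'` such that each `φ' v ∈ F (φ v)` and
at most `ρ` differently-`φ`-colored neighbors `u` of `v` have `φ' v ∈ F (φ u)`, the
coloring `φ'` is a `(ρ+D)`-defective `m`-coloring of `G`. -/
theorem stmt_12 {V : Type*} [Fintype V] [DecidableEq V] (G : SimpleGraph V)
    [DecidableRel G.Adj] (α m D ρ : ℕ)
    (φ : V → Fin α) (φ' : V → Fin m) (F : Fin α → Finset (Fin m))
    (hD : ∀ v, ((G.neighborFinset v).filter fun u => φ u = φ v).card ≤ D)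
    (h1 : ∀ v, φ' v ∈ F (φ v))
    (h2 : ∀ v, ((G.neighborFinset v).filter
        fun u => φ u ≠ φ v ∧ φ' v ∈ F (φ u)).card ≤ ρ) :
    ∀ v, ((G.neighborFinset v).filter fun u => φ' u = φ' v).card ≤ ρ + D := by
  intro v
  have hsub : ((G.neighborFinset v).filter fun u => φ' u = φ' v) ⊆
      ((G.neighborFinset v).filter fun u => φ u ≠ φ v ∧ φ' v ∈ F (φ u)) ∪
      ((G.neighborFinset v).filter fun u => φ u = φ v) := by
    intro u hu
    simp only [Finset.mem_filter, Finset.mem_union] at hu ⊢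
    by_cases h : φ u = φ v
    · exact Or.inr ⟨hu.1, h⟩
    · exact Or.inl ⟨hu.1, h, hu.2 ▸ h1 u⟩
  calc ((G.neighborFinset v).filter fun u => φ' u = φ' v).card
      ≤ _ := Finset.card_le_card hsub
    _ ≤ _ + _ := Finset.card_union_le _ _
    _ ≤ ρ + D := Nat.add_le_add (h2 v) (hD v)
end

section
/- Let V be a finite linearly ordered set, let G be a simple graph on V, and let π : V → V be a function such that for every edge {u,v} of G with u < v, one has π(u) = v (each vertex's edges to strictly larger neighbors all go to its single parent π(u)). Then G is acyclic, i.e., G is a forest. -/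
open SimpleGraph Walk

lemma key_aux {V : Type*} [LinearOrder V] {G : SimpleGraph V}
    (π : V → V) (hπ : ∀ u v, G.Adj u v → u < v → π u = v)
    {m : V} (c : G.Walk m m) (hc : c.IsCycle)
    (hmin : ∀ x ∈ c.support, m ≤ x) : False := by
  cases c with
  | nil => exact hc.ne_nil rfl
  | @cons _ b _ h p =>
    obtain ⟨y, q, h', hce⟩ := Walk.exists_cons_eq_concat h p
    have hbm : m < b := lt_of_le_of_ne (hmin b (by simp)) h.ne
    have hym : m < y := by
      refine lt_of_le_of_ne (hmin y ?_) (h'.ne')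
      rw [hce, Walk.support_concat]
      simp [q.end_mem_support]
    have hby : b = y := by rw [← hπ m b h hbm, hπ m y h'.symm hym]
    subst hby
    cases q with
    | nil => exact h'.ne' rfl
    | @cons _ z _ hq q' =>
      have hz : b = z := by
        have h1 : (Walk.cons h p).getVert 1 = b := by simp
        rw [hce] at h1
        simpa [Walk.concat_eq_append, Walk.getVert_cons_succ] using h1.symm
      subst hz
      -- q' : Walk z b with z = b, i.e. Walk b b
      have hp : p = q'.concat h' := by
        have := hce
        rw [Walk.concat_cons] at this
        injection this with h1 h2
      have hnd : p.support.Nodup := by simpa using hc.support_nodup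
      have hq'nd : q'.support.Nodup := by
        rw [hp, Walk.support_concat] at hnd
        exact hnd.sublist (List.sublist_append_left _ _)
      have hq'nil : q' = Walk.nil := by
        rw [← Walk.isPath_iff_eq_nil]
        rw [Walk.isPath_def]
        exact hq'nd
      have hlen := hc.three_le_length
      rw [hp, hq'nil] at hlen
      simp [Walk.length_concat] at hlen

/-- If `V` is a finite linearly ordered set, `G` a simple graph on `V`,
and `π : V → V` a function such that every edge `{u,v}` with `u < v` satisfies
`π u = v` (all edges to strictly larger neighbors go to the single parent), then
`G` is acyclic, i.e. a forest. -/
theorem stmt_13 {V : Type*} [Fintype V] [LinearOrder V] (G : SimpleGraph V)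
    (π : V → V) (hπ : ∀ u v, G.Adj u v → u < v → π u = v) :
    G.IsAcyclic := by
  intro v c hc
  classical
  have hne : c.support.toFinset.Nonempty := by
    simp [List.toFinset_nonempty_iff, c.support_ne_nil]
  set m := c.support.toFinset.min' hne with hm
  have hmmem : m ∈ c.support := by
    have := c.support.toFinset.min'_mem hne
    simpa using this
  refine key_aux π hπ (c.rotate m hmmem) (hc.rotate hmmem) ?_
  intro x hx
  have hx' : x ∈ c.support := by
    rcases (Walk.mem_support_iff _).1 hx with rfl | hx2
    · exact hmmem
    · have := (c.support_rotate m hmmem).mem_iff.1 hx2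
      exact List.mem_of_mem_tail this
  exact c.support.toFinset.min'_le x (by simpa using hx')
end

section
/- Let G be a finite simple graph with maximum degree at most Δ, where Δ ≥ 1. Then the edge set of G can be partitioned into Δ classes E₁, …, E_Δ such that for every 1 ≤ i ≤ Δ, the spanning subgraph of G with edge set Eᵢ is a forest (contains no cycles). -/
open SimpleGraph

lemma up_acyclic {V : Type*} (H : SimpleGraph V) (f : V → ℕ)
    (hf : Function.Injective f)
    (huniq : ∀ v w w', H.Adj v w → H.Adj v w' → f v < f w → f v < f w' → w = w') :
    H.IsAcyclic := by
  classical
  intro v p hp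
  have hsupne : v ∈ p.support.toFinset := by simp
  obtain ⟨u, huT, hmin⟩ := p.support.toFinset.exists_min_image f ⟨v, hsupne⟩
  have hu : u ∈ p.support := List.mem_toFinset.mp huT
  have hmin' : ∀ y ∈ p.support, f u ≤ f y := fun y hy => hmin y (List.mem_toFinset.mpr hy)
  have hp' : (p.rotate u hu).IsCycle := hp.rotate hu
  have hmemsup : ∀ y ∈ (p.rotate u hu).support, y ∈ p.support := by
    intro y hy
    rw [Walk.support_eq_cons] at hy
    rcases List.mem_cons.mp hy with rfl | hy
    · exact hu
    · exact List.mem_of_mem_tail ((Walk.support_rotate p u hu).mem_iff.mp hy)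
  cases hc : p.rotate u hu with
  | nil => rw [hc] at hp'; simp [Walk.isCycle_def, Walk.isTrail_def] at hp'
  | @cons _ w _ h q =>
    rw [hc] at hp' hmemsup
    cases hq : q.reverse with
    | nil => exact h.ne (Walk.eq_of_length_eq_zero (by simpa using congrArg Walk.length hq)).symm
    | @cons _ x _ h2 r =>
      -- h2 : H.Adj u x, r : Walk x w
      have hwmem : w ∈ p.support := hmemsup w (by simp)
      have hxmem : x ∈ p.support := by
        apply hmemsup
        rw [Walk.support_cons]
        have : x ∈ q.reverse.support := by rw [hq, Walk.support_cons]; simp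
        rw [Walk.support_reverse] at this
        exact List.mem_cons_of_mem _ (List.mem_reverse.mp this)
      have hfw : f u < f w := lt_of_le_of_ne (hmin' w hwmem) (fun e => h.ne (hf e))
      have hfx : f u < f x := lt_of_le_of_ne (hmin' x hxmem) (fun e => h2.ne (hf e))
      have hwx : w = x := huniq u w x h h2 hfw hfx
      have hedge : s(u, x) ∈ q.edges := by
        have : s(u, x) ∈ q.reverse.edges := by rw [hq, Walk.edges_cons]; simp
        rwa [Walk.edges_reverse, List.mem_reverse] at this
      have hnd := hp'.edges_nodup
      rw [Walk.edges_cons] at hnd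
      exact (List.nodup_cons.mp hnd).1 (hwx ▸ hedge)
open SimpleGraph Finset

section
variable {V : Type*} [Fintype V] [DecidableEq V] (G : SimpleGraph V) [DecidableRel G.Adj]

noncomputable def ff : V → ℕ := fun v => (Fintype.equivFin V v : ℕ)

lemma ff_inj : Function.Injective (ff (V := V)) :=
  fun _ _ h => (Fintype.equivFin V).injective (Fin.ext h)

noncomputable def UU (v : V) : Finset V :=
  (G.neighborFinset v).filter (fun w => ff v < ff w)

noncomputable def idx (v w : V) : ℕ :=
  ((UU G v).filter (fun u => ff u < ff w)).card

lemma idx_lt {v w : V} (Δ : ℕ) (hdeg : G.maxDegree ≤ Δ) (hw : w ∈ UU G v) :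
    idx G v w < Δ := by
  have h1 : ((UU G v).filter (fun u => ff u < ff w)) ⊂ UU G v := by
    rw [Finset.ssubset_iff_of_subset (Finset.filter_subset _ _)]
    exact ⟨w, hw, by simp⟩
  have h2 : (UU G v).card ≤ Δ := by
    refine le_trans (le_trans (Finset.card_filter_le _ _) ?_) (le_trans (G.degree_le_maxDegree v) hdeg)
    exact le_of_eq rfl
  exact lt_of_lt_of_le (Finset.card_lt_card h1) h2

lemma idx_inj {v w w' : V} (hw : w ∈ UU G v) (hw' : w' ∈ UU G v)
    (h : idx G v w = idx G v w') : w = w' := by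
  by_contra hne
  have hfne : ff w ≠ ff w' := fun e => hne (ff_inj e)
  wlog hlt : ff w < ff w' generalizing w w'
  · exact this hw' hw h.symm (Ne.symm hne) hfne.symm (lt_of_le_of_ne (not_lt.mp hlt) hfne.symm)
  have hsub : ((UU G v).filter (fun u => ff u < ff w)) ⊂ ((UU G v).filter (fun u => ff u < ff w')) := by
    have hsub' : ((UU G v).filter (fun u => ff u < ff w)) ⊆ ((UU G v).filter (fun u => ff u < ff w')) := by
      intro u hu
      rw [Finset.mem_filter] at hu ⊢
      exact ⟨hu.1, lt_trans hu.2 hlt⟩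
    rw [Finset.ssubset_iff_of_subset hsub']
    exact ⟨w, Finset.mem_filter.mpr ⟨hw, hlt⟩, by simp⟩
  have := Finset.card_lt_card hsub
  simp only [idx] at h
  omega

noncomputable def elabel : Sym2 V → ℕ :=
  Sym2.lift ⟨fun a b => if ff a < ff b then idx G a b else idx G b a, by
    intro a b
    rcases lt_trichotomy (ff a) (ff b) with hlt | heq | hgt
    · simp [hlt, not_lt.mpr hlt.le]
    · have : a = b := ff_inj heq
      subst this; simp
    · simp [hgt, not_lt.mpr hgt.le]⟩

lemma elabel_eq {a b : V} (h : ff a < ff b) : elabel G s(a, b) = idx G a b := by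
  simp [elabel, h]

lemma mem_UU {a b : V} (hadj : G.Adj a b) (h : ff a < ff b) : b ∈ UU G a := by
  simp [UU, hadj, h]

lemma elabel_lt {e : Sym2 V} (Δ : ℕ) (hdeg : G.maxDegree ≤ Δ) (he : e ∈ G.edgeSet) :
    elabel G e < Δ := by
  induction e with
  | _ a b =>
    rw [SimpleGraph.mem_edgeSet] at he
    rcases lt_trichotomy (ff a) (ff b) with hlt | heq | hgt
    · rw [elabel_eq G hlt]; exact idx_lt G Δ hdeg (mem_UU G he hlt)
    · exact absurd (ff_inj heq) he.ne
    · rw [Sym2.eq_swap, elabel_eq G hgt]; exact idx_lt G Δ hdeg (mem_UU G he.symm hgt)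

end

/-- Panconesi–Rizzi `Δ`-forest decomposition: The edge set of any finite
simple graph of maximum degree at most `Δ` (with `Δ ≥ 1`) can be partitioned into `Δ`
classes each of which spans a forest. -/
theorem stmt_14 {V : Type*} [Fintype V] [DecidableEq V] (G : SimpleGraph V)
    [DecidableRel G.Adj] (Δ : ℕ) (hΔ : 1 ≤ Δ) (hdeg : G.maxDegree ≤ Δ) :
    ∃ E : Fin Δ → Set (Sym2 V),
      (∀ i, E i ⊆ G.edgeSet) ∧
      (⋃ i, E i) = G.edgeSet ∧
      (∀ i j, i ≠ j → Disjoint (E i) (E j)) ∧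
      (∀ i, (SimpleGraph.fromEdgeSet (E i)).IsAcyclic) := by
  refine ⟨fun i => {e | e ∈ G.edgeSet ∧ elabel G e = i.val}, ?_, ?_, ?_, ?_⟩
  · intro i e he; exact he.1
  · apply Set.Subset.antisymm
    · intro e he
      obtain ⟨s, ⟨i, rfl⟩, hes⟩ := he
      exact hes.1
    · intro e he
      exact Set.mem_iUnion.mpr ⟨⟨elabel G e, elabel_lt G Δ hdeg he⟩, he, rfl⟩
  · intro i j hij
    rw [Set.disjoint_left]
    rintro e ⟨-, hi⟩ ⟨-, hj⟩
    exact hij (Fin.ext (hi ▸ hj))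
  · intro i
    apply up_acyclic _ ff ff_inj
    intro v w w' haw haw' hvw hvw'
    rw [SimpleGraph.fromEdgeSet_adj] at haw haw'
    obtain ⟨⟨hew, hlw⟩, -⟩ := haw
    obtain ⟨⟨hew', hlw'⟩, -⟩ := haw'
    rw [SimpleGraph.mem_edgeSet] at hew hew'
    rw [elabel_eq G hvw] at hlw
    rw [elabel_eq G hvw'] at hlw'
    exact idx_inj G (mem_UU G hew hvw) (mem_UU G hew' hvw') (hlw.trans hlw'.symm)
end
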